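/- Let p be an even positive integer, and let n₁, n₂ be positive integers with n := n₁+n₂ < p. Let λ₁,…,λ_{p/2} > 0. Then the function a ↦ Σ_{i=1}^{p/2}[1/(a(p−n)λ_i + p−n₁) + 1/(a(p−n)/λ_i + p−n₁)] is strictly decreasing on (0,∞), and there is a unique ã₁ > 0 at which it equals 1 provided its value at a = 0, namely p/(p−n₁), exceeds 1 (which holds since n₁ ≥ 1). Moreover: if n₁ ≤ p/2 then ã₁ ≤ n₁/(p−n), and if n₁ ≥ p/2 then ã₁ ≥ n₁/(p−n). Consequently, the limiting risk σ²(ã₁ + n₂/(p−n)) + ((p−n)/p)‖β⁽²⁾‖₂² of the pooled min-ℓ₂-norm interpolator when the source covariance has reciprocal eigenvalue pairs λ_i, 1/λ_i and the target covariance is I is at most (respectively, at least) the no-shift limiting risk σ²n/(p−n) + ((p−n)/p)‖β⁽²⁾‖₂² when n₁ ≤ p/2 (respectively, p/2 ≤ n₁ < p−n₂). -/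

import Mathlib

lemma recip_pair_le' (M N l : ℝ) (hN : 0 < N) (hNM : N ≤ M) (hl : 0 < l) :
    1 / (N * l + (2 * M - N)) + 1 / (N / l + (2 * M - N)) ≤ 1 / M := by
  have hM : 0 < M := hN.trans_le hNM
  have hA : 0 < N * l + (2 * M - N) := by nlinarith [mul_pos hN hl]
  have hB : 0 < N / l + (2 * M - N) := by
    have := div_pos hN hl; nlinarith
  rw [div_add_div _ _ hA.ne' hB.ne', div_le_div_iff₀ (mul_pos hA hB) hM]
  have key : (1 * (N / l + (2 * M - N)) + (N * l + (2 * M - N)) * 1) * M * l ≤ 1 * ((N * l + (2 * M - N)) * (N / l + (2 * M - N))) * l := by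
    have hdiv : N / l * l = N := div_mul_cancel₀ _ hl.ne'
    nlinarith [mul_nonneg (mul_nonneg hN.le (sub_nonneg.2 hNM)) (sq_nonneg (l - 1))]
  exact le_of_mul_le_mul_right key hl

lemma recip_pair_ge' (M N l : ℝ) (hM : 0 < M) (hNM : M ≤ N) (hN2 : N < 2 * M) (hl : 0 < l) :
    1 / M ≤ 1 / (N * l + (2 * M - N)) + 1 / (N / l + (2 * M - N)) := by
  have hN : 0 < N := hM.trans_le hNM
  have hA : 0 < N * l + (2 * M - N) := by nlinarith [mul_pos hN hl]
  have hB : 0 < N / l + (2 * M - N) := by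
    have := div_pos hN hl; nlinarith
  rw [div_add_div _ _ hA.ne' hB.ne', div_le_div_iff₀ hM (mul_pos hA hB)]
  have key : 1 * ((N * l + (2 * M - N)) * (N / l + (2 * M - N))) * l ≤ (1 * (N / l + (2 * M - N)) + (N * l + (2 * M - N)) * 1) * M * l := by
    have hdiv : N / l * l = N := div_mul_cancel₀ _ hl.ne'
    nlinarith [mul_nonneg (mul_nonneg hN.le (sub_nonneg.2 hNM)) (sq_nonneg (l - 1))]
  exact le_of_mul_le_mul_right key hl

/-- Covariate shift with reciprocal-pair source eigenvalues and identity
target covariance: the defining function of `ã₁` is strictly decreasing, has a unique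
positive root, and heterogeneity helps (resp. hurts) the pooled min-ℓ₂-norm interpolator
according to whether `n₁ ≤ p/2` (resp. `n₁ ≥ p/2`). Here `p = 2m`. -/
theorem covariate_shift_reciprocal_pairs_sample_size_dichotomy
    (m n₁ n₂ : ℕ) (hm : 0 < m) (hn₁ : 0 < n₁) (hn₂ : 0 < n₂)
    (hover : n₁ + n₂ < 2 * m)
    (lam : Fin m → ℝ) (hlam : ∀ i, 0 < lam i)
    (σ2 : ℝ) (hσ : 0 < σ2) (β2 : Fin (2 * m) → ℝ) :
    ∀ f : ℝ → ℝ,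
      f = (fun a =>
        ∑ i, (1 / (a * ((2 * m : ℝ) - ((n₁ : ℝ) + (n₂ : ℝ))) * lam i
                + ((2 * m : ℝ) - (n₁ : ℝ)))
          + 1 / (a * ((2 * m : ℝ) - ((n₁ : ℝ) + (n₂ : ℝ))) / lam i
                + ((2 * m : ℝ) - (n₁ : ℝ))))) →
      StrictAntiOn f (Set.Ioi (0 : ℝ)) ∧
      1 < (2 * m : ℝ) / ((2 * m : ℝ) - (n₁ : ℝ)) ∧
      (∃! a : ℝ, 0 < a ∧ f a = 1) ∧
      (∀ a : ℝ, 0 < a → f a = 1 →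
        (n₁ ≤ m →
          a ≤ (n₁ : ℝ) / ((2 * m : ℝ) - ((n₁ : ℝ) + (n₂ : ℝ))) ∧
          σ2 * (a + (n₂ : ℝ) / ((2 * m : ℝ) - ((n₁ : ℝ) + (n₂ : ℝ))))
              + (((2 * m : ℝ) - ((n₁ : ℝ) + (n₂ : ℝ))) / (2 * m : ℝ))
                * (∑ i, (β2 i) ^ 2)
            ≤ σ2 * (((n₁ : ℝ) + (n₂ : ℝ)) / ((2 * m : ℝ) - ((n₁ : ℝ) + (n₂ : ℝ))))
              + (((2 * m : ℝ) - ((n₁ : ℝ) + (n₂ : ℝ))) / (2 * m : ℝ))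
                * (∑ i, (β2 i) ^ 2)) ∧
        (m ≤ n₁ →
          (n₁ : ℝ) / ((2 * m : ℝ) - ((n₁ : ℝ) + (n₂ : ℝ))) ≤ a ∧
          σ2 * (((n₁ : ℝ) + (n₂ : ℝ)) / ((2 * m : ℝ) - ((n₁ : ℝ) + (n₂ : ℝ))))
              + (((2 * m : ℝ) - ((n₁ : ℝ) + (n₂ : ℝ))) / (2 * m : ℝ))
                * (∑ i, (β2 i) ^ 2)
            ≤ σ2 * (a + (n₂ : ℝ) / ((2 * m : ℝ) - ((n₁ : ℝ) + (n₂ : ℝ))))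
              + (((2 * m : ℝ) - ((n₁ : ℝ) + (n₂ : ℝ))) / (2 * m : ℝ))
                * (∑ i, (β2 i) ^ 2))) := by
  intro f hf
  haveI : Nonempty (Fin m) := ⟨⟨0, hm⟩⟩
  have hmR : (0 : ℝ) < m := by exact_mod_cast hm
  have hn₁R : (0 : ℝ) < n₁ := by exact_mod_cast hn₁
  have hn₂R : (0 : ℝ) < n₂ := by exact_mod_cast hn₂
  have hoverR : (n₁ : ℝ) + (n₂ : ℝ) < 2 * m := by exact_mod_cast hover
  set c : ℝ := (2 * m : ℝ) - ((n₁ : ℝ) + (n₂ : ℝ)) with hc_def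
  set d : ℝ := (2 * m : ℝ) - (n₁ : ℝ) with hd_def
  have hc : 0 < c := by rw [hc_def]; linarith
  have hd : 0 < d := by rw [hd_def]; linarith
  have hd2 : d < 2 * m := by rw [hd_def]; linarith
  -- strict antitonicity
  have hmono : StrictAntiOn f (Set.Ioi (0 : ℝ)) := by
    intro a ha b hb hab
    rw [hf]
    apply Finset.sum_lt_sum_of_nonempty Finset.univ_nonempty
    intro i _
    have hl := hlam i
    have ha' : (0 : ℝ) < a := ha
    have hA1 : 0 < a * c * lam i + d := by positivity
    have hA2 : 0 < a * c / lam i + d := by positivity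
    have h1 : a * c * lam i + d < b * c * lam i + d := by
      have := mul_pos hc hl
      nlinarith
    have h2 : a * c / lam i + d < b * c / lam i + d := by
      have h3 : a * c < b * c := by nlinarith
      have h4 : a * c / lam i < b * c / lam i := (div_lt_div_iff_of_pos_right hl).2 h3
      linarith
    exact add_lt_add (one_div_lt_one_div_of_lt hA1 h1) (one_div_lt_one_div_of_lt hA2 h2)
    -- value at 0
  have hgt1 : 1 < (2 * (m : ℝ)) / d := by
    rw [lt_div_iff₀ hd]; linarith
  have hf0 : f 0 = 2 * (m : ℝ) / d := by
    rw [hf]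
    simp only [zero_mul, zero_div, zero_add]
    rw [Finset.sum_const, Finset.card_univ, Fintype.card_fin, nsmul_eq_mul]
    field_simp
    ring
  have h10 : 1 < f 0 := by rw [hf0]; exact hgt1
  -- a point where f < 1
  set S : ℝ := ∑ i, (lam i + 1 / lam i) with hS_def
  have hS : 0 < S :=
    Finset.sum_pos (fun i _ => by have := hlam i; positivity) Finset.univ_nonempty
  set A : ℝ := (S + 1) / c with hA_def
  have hApos : 0 < A := div_pos (by linarith) hc
  have hAc : A * c = S + 1 := div_mul_cancel₀ _ hc.ne'
  have hfA : f A < 1 := by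
    rw [hf]
    have step : ∀ i : Fin m, 1 / (A * c * lam i + d) + 1 / (A * c / lam i + d)
        ≤ 1 / (S + 1) * (lam i + 1 / lam i) := by
      intro i
      have hl := hlam i
      have e1 : A * c * lam i = (S + 1) * lam i := by rw [hAc]
      have e2 : A * c / lam i = (S + 1) / lam i := by rw [hAc]
      have p1 : 0 < A * c * lam i := by positivity
      have p2 : 0 < A * c / lam i := by positivity
      calc 1 / (A * c * lam i + d) + 1 / (A * c / lam i + d)
          ≤ 1 / (A * c * lam i) + 1 / (A * c / lam i) :=
            add_le_add (one_div_le_one_div_of_le p1 (by linarith))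
              (one_div_le_one_div_of_le p2 (by linarith))
        _ = 1 / (S + 1) * (lam i + 1 / lam i) := by
            rw [e1, e2]; field_simp; ring
    calc (∑ i, (1 / (A * c * lam i + d) + 1 / (A * c / lam i + d)))
        ≤ ∑ i, 1 / (S + 1) * (lam i + 1 / lam i) :=
          Finset.sum_le_sum fun i _ => step i
      _ = 1 / (S + 1) * S := by rw [← Finset.mul_sum]
      _ < 1 := by
          rw [one_div_mul_eq_div]
          exact (div_lt_one (by linarith)).2 (by linarith)
  -- continuity on [0, A]
  have hcont : ContinuousOn f (Set.Icc 0 A) := by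
    rw [hf]
    apply continuousOn_finset_sum
    intro i _
    have hl := hlam i
    apply ContinuousOn.add
    · apply ContinuousOn.div continuousOn_const
        (Continuous.continuousOn
          (((continuous_id.mul continuous_const).mul continuous_const).add continuous_const))
      intro x hx
      have hx0 : 0 ≤ x := hx.1
      have : 0 < x * c * lam i + d := by positivity
      exact this.ne'
    · apply ContinuousOn.div continuousOn_const
        (Continuous.continuousOn
          (((continuous_id.mul continuous_const).div_const _).add continuous_const))
      intro x hx
      have hx0 : 0 ≤ x := hx.1
      have : 0 < x * c / lam i + d := by positivity
      exact this.ne'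
  obtain ⟨a₀, ha₀, hfa₀⟩ := intermediate_value_Icc' hApos.le hcont ⟨hfA.le, h10.le⟩
  have ha₀pos : 0 < a₀ := by
    rcases lt_or_eq_of_le ha₀.1 with h | h
    · exact h
    · exfalso; rw [← h] at hfa₀; rw [hfa₀] at h10; linarith
  refine ⟨hmono, hgt1, ⟨a₀, ⟨ha₀pos, hfa₀⟩, ?_⟩, ?_⟩
  · rintro b ⟨hb, hfb⟩
    exact hmono.injOn (Set.mem_Ioi.2 hb) (Set.mem_Ioi.2 ha₀pos) (by rw [hfb, hfa₀])
  -- the dichotomy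
  intro a ha hfa1
  have hastarpos : 0 < (n₁ : ℝ) / c := div_pos hn₁R hc
  have hac : (n₁ : ℝ) / c * c = (n₁ : ℝ) := div_mul_cancel₀ _ hc.ne'
  have hsum1 : (∑ _i : Fin m, 1 / (m : ℝ)) = 1 := by
    rw [Finset.sum_const, Finset.card_univ, Fintype.card_fin, nsmul_eq_mul]
    field_simp
  constructor
  · intro hle
    have hleR : (n₁ : ℝ) ≤ m := by exact_mod_cast hle
    have hfstar : f ((n₁ : ℝ) / c) ≤ 1 := by
      rw [hf]
      calc (∑ i, (1 / ((n₁ : ℝ) / c * c * lam i + d) + 1 / ((n₁ : ℝ) / c * c / lam i + d)))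
          ≤ ∑ _i : Fin m, 1 / (m : ℝ) := by
            apply Finset.sum_le_sum
            intro i _
            rw [hac, hd_def]
            exact recip_pair_le' (m : ℝ) (n₁ : ℝ) (lam i) hn₁R hleR (hlam i)
        _ = 1 := hsum1
    have haux : a ≤ (n₁ : ℝ) / c := by
      by_contra hcon
      push_neg at hcon
      have := hmono (Set.mem_Ioi.2 hastarpos) (Set.mem_Ioi.2 ha) hcon
      rw [hfa1] at this; linarith
    refine ⟨haux, ?_⟩
    have h5 : a + (n₂ : ℝ) / c ≤ ((n₁ : ℝ) + (n₂ : ℝ)) / c := by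
      rw [add_div]; linarith
    have h6 := mul_le_mul_of_nonneg_left h5 hσ.le
    linarith
  · intro hge
    have hgeR : (m : ℝ) ≤ n₁ := by exact_mod_cast hge
    have hn₁lt : (n₁ : ℝ) < 2 * m := by linarith
    have hfstar : 1 ≤ f ((n₁ : ℝ) / c) := by
      rw [hf]
      calc (1 : ℝ) = ∑ _i : Fin m, 1 / (m : ℝ) := hsum1.symm
        _ ≤ ∑ i, (1 / ((n₁ : ℝ) / c * c * lam i + d) + 1 / ((n₁ : ℝ) / c * c / lam i + d)) := by
            apply Finset.sum_le_sum
            intro i _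
            rw [hac, hd_def]
            exact recip_pair_ge' (m : ℝ) (n₁ : ℝ) (lam i) hmR hgeR hn₁lt (hlam i)
    have haux : (n₁ : ℝ) / c ≤ a := by
      by_contra hcon
      push_neg at hcon
      have := hmono (Set.mem_Ioi.2 ha) (Set.mem_Ioi.2 hastarpos) hcon
      rw [hfa1] at this; linarith
    refine ⟨haux, ?_⟩
    have h5 : ((n₁ : ℝ) + (n₂ : ℝ)) / c ≤ a + (n₂ : ℝ) / c := by
      rw [add_div]; linarith
    have h6 := mul_le_mul_of_nonneg_left h5 hσ.le
    linarith
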